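/- With P_j the type A₁ Macdonald polynomial and O_C the operator defined by O_C = O_A O_B - q^{-1/2} O_B O_A, where (O_A f)(z) = ((1-tz²)/(1-z²)) f(q^{1/2}z) + ((1-tz^{-2})/(1-z^{-2})) f(q^{-1/2}z) and (O_B f)(z) = (z+1/z)f(z), one has O_C P_j(z,z^{-1}) = q^{(j-1)/2} t (q-1) P_{j+1}(z,z^{-1}) - (q^{-(j+1)/2}(1-q)(1-q^j)(1-t²q^{j-1}))/((1-tq^j)(1-tq^{j-1})) · P_{j-1}(z,z^{-1}). -/

import Mathlib

/-- The type `A₁` Macdonald polynomial. -/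
noncomputable def macd {F : Type*} [Field F] (q t : F) (j : ℕ) (x1 x2 : F) : F :=
  x1 ^ j * ∑ n ∈ Finset.range (j + 1), (x2 / x1) ^ n *
    ∏ i ∈ Finset.range n,
      ((1 - q ^ (j - i)) * (1 - t * q ^ i)) /
        ((1 - t * q ^ (j - i - 1)) * (1 - q ^ (i + 1)))

/-- `(O_A f)(z)`, with `r = q^{1/2}`. -/
noncomputable def OA {F : Type*} [Field F] (t r : F) (f : F → F) (z : F) : F :=
  ((1 - t * z ^ 2) / (1 - z ^ 2)) * f (r * z) +
    ((1 - t * (z⁻¹) ^ 2) / (1 - (z⁻¹) ^ 2)) * f (r⁻¹ * z)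

/-- `(O_B f)(z) = (z + 1/z) f(z)`. -/
noncomputable def OB {F : Type*} [Field F] (f : F → F) (z : F) : F :=
  (z + z⁻¹) * f z

/-- `O_C = O_A O_B - q^{-1/2} O_B O_A`. -/
noncomputable def OC {F : Type*} [Field F] (t r : F) (f : F → F) (z : F) : F :=
  OA t r (OB f) z - r⁻¹ * OB (OA t r f) z

namespace OCaux

variable {F : Type*} [Field F]

noncomputable def cf (q t : F) (j : ℕ) (n : ℕ) : F :=
  ∏ i ∈ Finset.range n,
      ((1 - q ^ (j - i)) * (1 - t * q ^ i)) /
        ((1 - t * q ^ (j - i - 1)) * (1 - q ^ (i + 1)))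

lemma cf_zero (q t : F) (j : ℕ) : cf q t j 0 = 1 := by simp [cf]

lemma cf_succ (q t : F) (j n : ℕ) :
    cf q t j (n + 1) = cf q t j n *
      (((1 - q ^ (j - n)) * (1 - t * q ^ n)) /
        ((1 - t * q ^ (j - n - 1)) * (1 - q ^ (n + 1)))) :=
  Finset.prod_range_succ _ n

lemma cf_vanish (q t : F) (j n : ℕ) (h : j < n) : cf q t j n = 0 := by
  apply Finset.prod_eq_zero (Finset.mem_range.2 h)
  simp [Nat.sub_self]

lemma cf_step (q t : F) (hq : ∀ m : ℕ, 1 ≤ m → 1 - q ^ m ≠ 0)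
    (ht : ∀ m : ℕ, 1 - t * q ^ m ≠ 0) (j n : ℕ) :
    cf q t j (n + 1) * ((1 - t * q ^ (j - n - 1)) * (1 - q ^ (n + 1))) =
      cf q t j n * ((1 - q ^ (j - n)) * (1 - t * q ^ n)) := by
  have h1 : (1 - t * q ^ (j - n - 1)) ≠ 0 := ht _
  have h2 : (1 - q ^ (n + 1)) ≠ 0 := hq _ (by omega)
  rw [cf_succ]
  field_simp


lemma cf_R1 (q t : F) (hq : ∀ m : ℕ, 1 ≤ m → 1 - q ^ m ≠ 0)
    (ht : ∀ m : ℕ, 1 - t * q ^ m ≠ 0) (j : ℕ) :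
    ∀ n, cf q t (j + 1) n * ((1 - q ^ (j + 1 - n)) * (1 - t * q ^ j)) =
      cf q t j n * ((1 - q ^ (j + 1)) * (1 - t * q ^ (j - n)))
  | 0 => by simp [cf_zero]
  | (n + 1) => by
    have IH := cf_R1 q t hq ht j n
    have h1 := cf_step q t hq ht (j + 1) n
    have h2 := cf_step q t hq ht j n
    have e1 : j + 1 - n - 1 = j - n := by omega
    have e2 : j + 1 - (n + 1) = j - n := by omega
    have e3 : j - (n + 1) = j - n - 1 := by omega
    rw [e1] at h1
    rw [e2, e3]
    apply mul_right_cancel₀ (mul_ne_zero (ht (j - n)) (hq (n + 1) (by omega)))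
    linear_combination ((1 - q ^ (j - n)) * (1 - t * q ^ j)) * h1 +
      ((1 - q ^ (j - n)) * (1 - t * q ^ n)) * IH -
      ((1 - q ^ (j + 1)) * (1 - t * q ^ (j - n))) * h2

lemma cf_diag (q t : F) (hq : ∀ m : ℕ, 1 ≤ m → 1 - q ^ m ≠ 0)
    (ht : ∀ m : ℕ, 1 - t * q ^ m ≠ 0) : ∀ j, cf q t j j = 1
  | 0 => cf_zero q t 0
  | (j + 1) => by
    have IH := cf_diag q t hq ht j
    have h1 := cf_step q t hq ht (j + 1) j
    have h2 := cf_R1 q t hq ht j j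
    rw [IH] at h2
    have e1 : j + 1 - j - 1 = 0 := by omega
    have e2 : j + 1 - j = 1 := by omega
    have e3 : j - j = 0 := by omega
    rw [e1, e2] at h1
    rw [e2, e3] at h2
    apply mul_right_cancel₀ (mul_ne_zero (ht 0) (hq (j + 1) (by omega)))
    linear_combination h1 + h2

lemma macd_sum (q t : F) (j : ℕ) (w : F) :
    macd q t j w w⁻¹ = w ^ j * ∑ n ∈ Finset.range (j + 1), cf q t j n * (w⁻¹ * w⁻¹) ^ n := by
  unfold macd cf
  congr 1
  refine Finset.sum_congr rfl fun n _ => ?_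
  rw [div_eq_mul_inv, mul_comm]

lemma sum_shift (N : ℕ) (G H : ℕ → F) (hGN : G N = 0) (hH0 : H 0 = 0)
    (hGH : ∀ n, n < N → G n = H (n + 1)) :
    ∑ n ∈ Finset.range (N + 1), G n = ∑ n ∈ Finset.range (N + 1), H n := by
  rw [Finset.sum_range_succ, Finset.sum_range_succ', hGN, hH0, add_zero, add_zero]
  exact Finset.sum_congr rfl fun n hn => hGH n (Finset.mem_range.1 hn)

lemma sum_mix (N : ℕ) (f g h e : ℕ → F) (h0 : f 0 = h 0) (hN : g N = e N)
    (hstep : ∀ n, n < N → f (n + 1) + g n = h (n + 1) + e n) :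
    (∑ n ∈ Finset.range (N + 1), f n) + ∑ n ∈ Finset.range (N + 1), g n =
      (∑ n ∈ Finset.range (N + 1), h n) + ∑ n ∈ Finset.range (N + 1), e n := by
  rw [Finset.sum_range_succ' f, Finset.sum_range_succ g, Finset.sum_range_succ' h,
    Finset.sum_range_succ e]
  have key : ∑ n ∈ Finset.range N, (f (n + 1) + g n) = ∑ n ∈ Finset.range N, (h (n + 1) + e n) :=
    Finset.sum_congr rfl fun n hn => hstep n (Finset.mem_range.1 hn)
  rw [Finset.sum_add_distrib, Finset.sum_add_distrib] at key
  linear_combination key + h0 + hN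




lemma eigen (q t r : F) (hr : r ^ 2 = q) (hr0 : r ≠ 0)
    (hq : ∀ m : ℕ, 1 ≤ m → 1 - q ^ m ≠ 0) (ht : ∀ m : ℕ, 1 - t * q ^ m ≠ 0)
    (j : ℕ) (z : F) (hz : z ≠ 0)
    (hz1 : 1 - z ^ 2 ≠ 0) (hz2 : 1 - (z⁻¹) ^ 2 ≠ 0) :
    (1 - t * z ^ 2) / (1 - z ^ 2) * macd q t j (r * z) (r * z)⁻¹ +
      (1 - t * (z⁻¹) ^ 2) / (1 - (z⁻¹) ^ 2) * macd q t j (r⁻¹ * z) (r⁻¹ * z)⁻¹ =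
    (t * r ^ j + (r⁻¹) ^ j) * macd q t j z z⁻¹ := by
  have hq0 : q ≠ 0 := by rw [← hr]; exact pow_ne_zero 2 hr0
  rw [macd_sum, macd_sum, macd_sum]
  have e1 : (r * z)⁻¹ * (r * z)⁻¹ = q⁻¹ * (z⁻¹ * z⁻¹) := by
    rw [mul_inv, ← hr, sq, mul_inv]; ring
  have e2 : (r⁻¹ * z)⁻¹ * (r⁻¹ * z)⁻¹ = q * (z⁻¹ * z⁻¹) := by
    rw [mul_inv, inv_inv, ← hr, sq]; ring
  rw [e1, e2, mul_pow r z, mul_pow r⁻¹ z]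
  set u := z⁻¹ * z⁻¹ with hu
  set S1 := ∑ n ∈ Finset.range (j + 1), cf q t j n * (q⁻¹ * u) ^ n with hS1
  set S2 := ∑ n ∈ Finset.range (j + 1), cf q t j n * (q * u) ^ n with hS2
  set S3 := ∑ n ∈ Finset.range (j + 1), cf q t j n * u ^ n with hS3
  have hvj : q ^ j * (q⁻¹) ^ j = 1 := by rw [← mul_pow, mul_inv_cancel₀ hq0, one_pow]
  have hqj : r ^ j * r ^ j = q ^ j := by rw [← pow_add, ← two_mul, pow_mul, hr]
  have hrj : r ^ j * (r⁻¹) ^ j = 1 := by rw [← mul_pow, mul_inv_cancel₀ hr0, one_pow]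
  have hzu : z ^ 2 * u = 1 := by rw [hu]; field_simp
  have key : q ^ j * S1 + t * S2 - (t * q ^ j + 1) * S3 =
      z ^ 2 * (t * q ^ j * S1 + S2 - (t * q ^ j + 1) * S3) := by
    have L : q ^ j * S1 + t * S2 - (t * q ^ j + 1) * S3 =
        ∑ n ∈ Finset.range (j + 1),
          (q ^ j * (cf q t j n * (q⁻¹ * u) ^ n) + t * (cf q t j n * (q * u) ^ n)
            - (t * q ^ j + 1) * (cf q t j n * u ^ n)) := by
      rw [hS1, hS2, hS3, Finset.mul_sum, Finset.mul_sum, Finset.mul_sum,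
        ← Finset.sum_add_distrib, ← Finset.sum_sub_distrib]
    have R : z ^ 2 * (t * q ^ j * S1 + S2 - (t * q ^ j + 1) * S3) =
        ∑ n ∈ Finset.range (j + 1),
          z ^ 2 * (t * q ^ j * (cf q t j n * (q⁻¹ * u) ^ n) + cf q t j n * (q * u) ^ n
            - (t * q ^ j + 1) * (cf q t j n * u ^ n)) := by
      rw [hS1, hS2, hS3, Finset.mul_sum, Finset.mul_sum,
        ← Finset.sum_add_distrib, ← Finset.sum_sub_distrib, ← Finset.mul_sum]
    rw [L, R]
    refine sum_shift j _ _ ?_ ?_ ?_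
    · simp only [mul_pow]
      linear_combination (cf q t j j * u ^ j) * hvj
    · simp only [pow_zero, mul_one]
      ring
    · intro n hn
      obtain ⟨k, rfl⟩ : ∃ k, j = n + 1 + k := ⟨j - (n + 1), by omega⟩
      have hstep := cf_step q t hq ht (n + 1 + k) n
      simp only [show n + 1 + k - n - 1 = k by omega, show n + 1 + k - n = k + 1 by omega,
        show k + 1 - 1 = k by omega] at hstep
      have h1 : (1 - t * q ^ k) ≠ 0 := ht k
      have h2 : (1 - q ^ (n + 1)) ≠ 0 := hq _ (by omega)
      have hv1 : q ^ n * (q⁻¹) ^ n = 1 := by rw [← mul_pow, mul_inv_cancel₀ hq0, one_pow]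
      have hv2 : q ^ (n + 1) * (q⁻¹) ^ (n + 1) = 1 := by
        rw [← mul_pow, mul_inv_cancel₀ hq0, one_pow]
      have hred : z ^ 2 * u ^ (n + 1) = u ^ n := by
        calc z ^ 2 * u ^ (n + 1) = z ^ 2 * u * u ^ n := by ring
        _ = u ^ n := by rw [hzu, one_mul]
      have main : (q ^ (n + k + 2) + t * q ^ (2 * n + 1) - t * q ^ (2 * n + 2 + k) - q ^ (n + 1))
            * cf q t (n + 1 + k) n =
          (t * q ^ (n + k + 1) + q ^ (2 * n + 2) - t * q ^ (2 * n + 2 + k) - q ^ (n + 1))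
            * cf q t (n + 1 + k) (n + 1) := by
        apply mul_right_cancel₀ (mul_ne_zero h1 h2)
        linear_combination
          (-(t * q ^ (n + k + 1) + q ^ (2 * n + 2) - t * q ^ (2 * n + 2 + k) - q ^ (n + 1)))
            * hstep
      simp only [mul_pow]
      refine mul_left_cancel₀ (pow_ne_zero (n + 1) hq0) ?_
      linear_combination (u ^ n) * main
        + (q ^ (n + k + 2) * cf q t (n + 1 + k) n * u ^ n) * hv1
        - (t * q ^ (n + k + 1) * cf q t (n + 1 + k) (n + 1) * u ^ n) * hv2
        - (q ^ (n + 1) * (t * q ^ (n + 1 + k) * (q⁻¹) ^ (n + 1) + q ^ (n + 1)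
            - t * q ^ (n + 1 + k) - 1) * cf q t (n + 1 + k) (n + 1)) * hred
  rw [show (1 - t * (z⁻¹) ^ 2) / (1 - (z⁻¹) ^ 2) = (t - z ^ 2) / (1 - z ^ 2) by
    rw [div_eq_div_iff hz2 hz1]; field_simp; ring]
  rw [div_mul_eq_mul_div, div_mul_eq_mul_div, ← add_div, div_eq_iff hz1]
  refine mul_left_cancel₀ (pow_ne_zero j hr0) ?_
  linear_combination (z ^ j) * key +
    (z ^ j * ((1 - t * z ^ 2) * S1 - t * (1 - z ^ 2) * S3)) * hqj +
    (z ^ j * ((t - z ^ 2) * S2 - (1 - z ^ 2) * S3)) * hrj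




lemma three_term (q t : F) (hq0 : q ≠ 0)
    (hq : ∀ m : ℕ, 1 ≤ m → 1 - q ^ m ≠ 0) (ht : ∀ m : ℕ, 1 - t * q ^ m ≠ 0)
    (i : ℕ) (w : F) (hw : w ≠ 0) :
    (w + w⁻¹) * macd q t (i + 1) w w⁻¹ =
      macd q t (i + 2) w w⁻¹ +
        ((1 - q ^ (i + 1)) * (1 - t ^ 2 * q ^ i)) / ((1 - t * q ^ (i + 1)) * (1 - t * q ^ i))
          * macd q t i w w⁻¹ := by
  rw [macd_sum, macd_sum, macd_sum]
  set u := w⁻¹ * w⁻¹ with hu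
  set B := ((1 - q ^ (i + 1)) * (1 - t ^ 2 * q ^ i)) / ((1 - t * q ^ (i + 1)) * (1 - t * q ^ i))
    with hB
  set S1 := ∑ n ∈ Finset.range (i + 2), cf q t (i + 1) n * u ^ n with hS1
  set S2 := ∑ n ∈ Finset.range (i + 3), cf q t (i + 2) n * u ^ n with hS2
  set S3 := ∑ n ∈ Finset.range (i + 1), cf q t i n * u ^ n with hS3
  have hww : w * w⁻¹ = 1 := mul_inv_cancel₀ hw
  have hkey : S1 + u * S1 = S2 + B * (u * S3) := by
    have l1 : u * S1 = ∑ n ∈ Finset.range (i + 3), cf q t (i + 1) n * u ^ (n + 1) := by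
      rw [hS1, Finset.mul_sum, Finset.sum_range_succ _ (i + 2),
        cf_vanish q t (i + 1) (i + 2) (by omega)]
      simp only [zero_mul, add_zero]
      exact Finset.sum_congr rfl fun n _ => by ring
    have l2 : B * (u * S3) = ∑ n ∈ Finset.range (i + 3), B * (cf q t i n * u ^ (n + 1)) := by
      rw [hS3, Finset.mul_sum, Finset.mul_sum, Finset.sum_range_succ _ (i + 2),
        Finset.sum_range_succ _ (i + 1), cf_vanish q t i (i + 2) (by omega),
        cf_vanish q t i (i + 1) (by omega)]
      simp only [zero_mul, mul_zero, add_zero]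
      exact Finset.sum_congr rfl fun n _ => by ring
    have l3 : S1 = ∑ n ∈ Finset.range (i + 3), cf q t (i + 1) n * u ^ n := by
      rw [hS1, Finset.sum_range_succ _ (i + 2), cf_vanish q t (i + 1) (i + 2) (by omega)]
      simp only [zero_mul, add_zero]
    rw [l1, l2, l3, hS2]
    refine sum_mix (i + 2) (fun n => cf q t (i + 1) n * u ^ n)
      (fun n => cf q t (i + 1) n * u ^ (n + 1))
      (fun n => cf q t (i + 2) n * u ^ n)
      (fun n => B * (cf q t i n * u ^ (n + 1))) ?_ ?_ ?_
    · show cf q t (i + 1) 0 * u ^ 0 = cf q t (i + 2) 0 * u ^ 0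
      rw [cf_zero, cf_zero]
    · show cf q t (i + 1) (i + 2) * u ^ (i + 2 + 1) = B * (cf q t i (i + 2) * u ^ (i + 2 + 1))
      rw [cf_vanish q t (i + 1) (i + 2) (by omega), cf_vanish q t i (i + 2) (by omega)]
      simp
    · intro n hn
      have hcoef : cf q t (i + 1) (n + 1) + cf q t (i + 1) n =
          cf q t (i + 2) (n + 1) + B * cf q t i n := by
        by_cases hcase : n = i + 1
        · subst hcase
          rw [cf_vanish q t (i + 1) (i + 2) (by omega), cf_vanish q t i (i + 1) (by omega)]
          simp only [show i + 1 + 1 = i + 2 by omega]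
          rw [cf_diag q t hq ht, cf_diag q t hq ht]
          ring
        · have hni : n ≤ i := by omega
          obtain ⟨d, rfl⟩ : ∃ d, i = n + d := ⟨i - n, by omega⟩
          have hstepA := cf_step q t hq ht (n + d + 1) n
          simp only [show n + d + 1 - n - 1 = d by omega, show n + d + 1 - n = d + 1 by omega,
            show d + 1 - 1 = d by omega] at hstepA
          have hR1a := cf_R1 q t hq ht (n + d + 1) (n + 1)
          simp only [show n + d + 1 + 1 = n + d + 2 by omega,
            show n + d + 1 + 1 - (n + 1) = d + 1 by omega,
            show n + d + 1 - (n + 1) = d by omega] at hR1a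
          have hR1b := cf_R1 q t hq ht (n + d) n
          simp only [show n + d + 1 - n = d + 1 by omega, show n + d - n = d by omega] at hR1b
          have hB' : B * ((1 - t * q ^ (n + d + 1)) * (1 - t * q ^ (n + d))) =
              (1 - q ^ (n + d + 1)) * (1 - t ^ 2 * q ^ (n + d)) := by
            rw [hB, div_mul_cancel₀ _ (mul_ne_zero (ht (n + d + 1)) (ht (n + d)))]
          have hM : ((1 - q ^ (d + 1)) * (1 - t * q ^ (n + d + 1))) *
              ((1 - t * q ^ (n + d)) * (1 - t * q ^ d)) ≠ 0 :=
            mul_ne_zero (mul_ne_zero (hq (d + 1) (by omega)) (ht (n + d + 1)))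
              (mul_ne_zero (ht (n + d)) (ht d))
          apply mul_right_cancel₀ hM
          linear_combination
            (-((1 - t * q ^ (n + d)) * q ^ d * (q - t))) * hstepA +
            (-((1 - t * q ^ (n + d)) * (1 - t * q ^ d))) * hR1a +
            ((1 - q ^ (d + 1)) * (1 - t ^ 2 * q ^ (n + d))) * hR1b +
            (-(cf q t (n + d) n * (1 - q ^ (d + 1)) * (1 - t * q ^ d))) * hB'
      linear_combination (u ^ (n + 1)) * hcoef
  linear_combination (w ^ (i + 2)) * hkey + (w ^ (i + 2) * B * S3 - w ^ (i + 2) * S1) * hu +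
    (B * w ^ i * S3 * (w * w⁻¹ + 1) - w ^ (i + 1) * w⁻¹ * S1) * hww


end OCaux

open OCaux in
/-- `O_C P_j(z,z⁻¹) = q^{(j-1)/2} t (q-1) P_{j+1}(z,z⁻¹)
  - (q^{-(j+1)/2}(1-q)(1-q^j)(1-t²q^{j-1}))/((1-tq^j)(1-tq^{j-1})) P_{j-1}(z,z⁻¹)`,
with `r = q^{1/2}` (so `q^{(j-1)/2} = r^{j-1}`, `q^{-(j+1)/2} = r^{-(j+1)}`). -/
theorem OC_macd {F : Type*} [Field F] (q t r : F) (hr : r ^ 2 = q) (hr0 : r ≠ 0)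
    (hq : ∀ m : ℕ, 1 ≤ m → 1 - q ^ m ≠ 0)
    (ht : ∀ m : ℕ, 1 - t * q ^ m ≠ 0)
    (j : ℕ) (hj : 1 ≤ j) (z : F) (hz : z ≠ 0)
    (hz1 : 1 - z ^ 2 ≠ 0) (hz2 : 1 - (z⁻¹) ^ 2 ≠ 0)
    (hz3 : 1 - (r * z) ^ 2 ≠ 0) (hz4 : 1 - (r⁻¹ * z) ^ 2 ≠ 0) :
    OC t r (fun w => macd q t j w w⁻¹) z =
      r ^ (j - 1) * t * (q - 1) * macd q t (j + 1) z z⁻¹ -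
        ((r⁻¹) ^ (j + 1) * (1 - q) * (1 - q ^ j) * (1 - t ^ 2 * q ^ (j - 1))) /
          ((1 - t * q ^ j) * (1 - t * q ^ (j - 1))) * macd q t (j - 1) z z⁻¹ := by
  have hq0 : q ≠ 0 := by rw [← hr]; exact pow_ne_zero 2 hr0
  obtain ⟨i, rfl⟩ : ∃ i, j = i + 1 := ⟨j - 1, by omega⟩
  simp only [Nat.add_sub_cancel, show i + 1 + 1 = i + 2 by omega]
  simp only [OC, OA, OB]
  have ht3a := three_term q t hq0 hq ht i (r * z) (mul_ne_zero hr0 hz)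
  have ht3b := three_term q t hq0 hq ht i (r⁻¹ * z) (mul_ne_zero (inv_ne_zero hr0) hz)
  have ht3c := three_term q t hq0 hq ht i z hz
  have hA1 := eigen q t r hr hr0 hq ht (i + 2) z hz hz1 hz2
  have hA2 := eigen q t r hr hr0 hq ht i z hz hz1 hz2
  have hA0 := eigen q t r hr hr0 hq ht (i + 1) z hz hz1 hz2
  rw [ht3a, ht3b, hA0]
  set B := ((1 - q ^ (i + 1)) * (1 - t ^ 2 * q ^ i)) / ((1 - t * q ^ (i + 1)) * (1 - t * q ^ i))
    with hB
  have hcoef : ((r⁻¹) ^ (i + 2) * (1 - q) * (1 - q ^ (i + 1)) * (1 - t ^ 2 * q ^ i)) /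
      ((1 - t * q ^ (i + 1)) * (1 - t * q ^ i)) = (r⁻¹) ^ (i + 2) * (1 - q) * B := by
    rw [hB]; ring
  rw [hcoef]
  have hx1 : r * r⁻¹ = 1 := mul_inv_cancel₀ hr0
  linear_combination hA1 + B * hA2 - (r⁻¹ * (t * r ^ (i + 1) + (r⁻¹) ^ (i + 1))) * ht3c +
    (-(t * r ^ i) * macd q t (i + 2) z z⁻¹ -
      B * macd q t i z z⁻¹ * (t * r ^ i + (r⁻¹) ^ i * (r * r⁻¹ + 1))) * hx1 +
    ((t * r ^ i) * macd q t (i + 2) z z⁻¹ + B * macd q t i z z⁻¹ * (r⁻¹) ^ (i + 2)) * hr
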